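/- Let α, β, γ ∈ ℂ with β ≠ 0 and γ ≠ 0, and let θ be the ℂ-algebra automorphism of ℂ[x,y] determined by θ(x) = y and θ(y) = αy + βx + γ. If 1 is a root of the polynomial X² − αX − β (equivalently, α + β = 1), then θ has infinite order. -/

import Mathlib

open MvPolynomial

/-- Let `β ≠ 0`, `γ ≠ 0` and let `θ` be the `ℂ`-algebra automorphism of `ℂ[x,y]` with
`θ(x) = y` and `θ(y) = αy + βx + γ`.  If `1` is a root of `X² − αX − β`
(equivalently `α + β = 1`), then `θ` has infinite order. -/
theorem theta_infinite_order_of_root_one (α β γ : ℂ) (hβ : β ≠ 0) (hγ : γ ≠ 0)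
    (θ : MvPolynomial (Fin 2) ℂ ≃ₐ[ℂ] MvPolynomial (Fin 2) ℂ)
    (hθx : θ (X 0) = X 1)
    (hθy : θ (X 1) = C α * X 1 + C β * X 0 + C γ)
    (hroot : α + β = 1) :
    ¬ IsOfFinOrder θ := by
  set q : MvPolynomial (Fin 2) ℂ := C β * X 0 + X 1 with hq
  have hCθ : ∀ r : ℂ, θ (C r) = C r := fun r => by
    simpa [MvPolynomial.algebraMap_eq] using θ.commutes r
  have hC1 : (C β + C α : MvPolynomial (Fin 2) ℂ) = 1 := by
    rw [← C_add, add_comm β α, hroot, C_1]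
  have key : θ q = q + C γ := by
    rw [hq, map_add, map_mul, hCθ, hθx, hθy]
    linear_combination (X 1 : MvPolynomial (Fin 2) ℂ) * hC1
  have hpow : ∀ n : ℕ, (θ ^ n) q = q + (n : ℕ) • C γ := by
    intro n
    induction n with
    | zero => simp
    | succ n ih =>
      rw [pow_succ', AlgEquiv.mul_apply, ih, map_add, key, add_smul, one_smul]
      simp only [nsmul_eq_mul, map_natCast, map_mul]
      rw [hCθ]
      ring
  intro h
  obtain ⟨n, hn, hθn⟩ := isOfFinOrder_iff_pow_eq_one.mp h
  have := hpow n
  rw [hθn] at this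
  simp only [AlgEquiv.one_apply, nsmul_eq_mul] at this
  have h0 : (n : ℂ) * γ = 0 := by
    have : (C ((n : ℂ) * γ) : MvPolynomial (Fin 2) ℂ) = 0 := by
      have h' := left_eq_add.mp this
      rw [map_mul, map_natCast]
      exact h'
    exact_mod_cast (C_eq_zero.mp this)
  rcases mul_eq_zero.mp h0 with h | h
  · exact (Nat.cast_ne_zero.mpr hn.ne').elim (by exact_mod_cast h)
  · exact hγ h
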